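/- For every integer n ≥ 2 the q-Hermite polynomial H_{n,q} satisfies the second-order q-difference equation q^{n-2} D_q^2 H_{n,q}(x) − x q^n D_q H_{n,q}(x) + [n]_q H_{n,q}(qx) = 0, as an identity of real polynomials in x. -/

import Mathlib

open Polynomial Finset

/-- The q-integer [n]_q = 1 + q + ... + q^(n-1). -/
noncomputable def qInt (q : ℝ) (n : ℕ) : ℝ := ∑ i ∈ Finset.range n, q ^ i

/-- The q-factorial [n]_q! = [1]_q [2]_q ... [n]_q, with [0]_q! = 1. -/
noncomputable def qFact (q : ℝ) : ℕ → ℝ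
  | 0 => 1
  | n + 1 => qFact q n * qInt q (n + 1)

/-- The q-binomial coefficient [n choose k]_q = [n]_q! / ([k]_q! [n-k]_q!). -/
noncomputable def qBinom (q : ℝ) (n k : ℕ) : ℝ := qFact q n / (qFact q k * qFact q (n - k))

/-- The q-derivative on real polynomials, determined by D_q(x^n) = [n]_q x^(n-1). -/
noncomputable def qDeriv (q : ℝ) (p : Polynomial ℝ) : Polynomial ℝ :=
  p.sum fun n a => Polynomial.C (a * qInt q n) * Polynomial.X ^ (n - 1)

/-- The q-double factorial `[2n]_q!! = [2n]_q [2n-2]_q ⋯ [2]_q`, with `[0]_q!! = 1`;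
`qEvenDFact q n` is `[2n]_q!!`. -/
noncomputable def qEvenDFact (q : ℝ) : ℕ → ℝ
  | 0 => 1
  | n + 1 => qInt q (2 * (n + 1)) * qEvenDFact q n

/-- The coefficients of the q-Hermite polynomials:
`h_{2k} = (−1)^k q^(k(k-1)) [2k]_q!/[2k]_q!!` and `h_{2k+1} = 0`. -/
noncomputable def qHermiteCoeff (q : ℝ) (m : ℕ) : ℝ :=
  if m % 2 = 0 then
    (-1 : ℝ) ^ (m / 2) * q ^ ((m / 2) * (m / 2 - 1)) * qFact q m / qEvenDFact q (m / 2)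
  else 0

/-- The q-Hermite polynomials `H_{n,q}(x) = Σ_{m=0}^n [n choose m]_q h_m x^(n-m)`. -/
noncomputable def qHermite (q : ℝ) (n : ℕ) : Polynomial ℝ :=
  ∑ m ∈ Finset.range (n + 1),
    Polynomial.C (qBinom q n m * qHermiteCoeff q m) * Polynomial.X ^ (n - m)

/- ---------- auxiliary lemmas ---------- -/

noncomputable def Bc (q : ℝ) (n m : ℕ) : ℝ := qBinom q n m * qHermiteCoeff q m

lemma qInt_zero (q : ℝ) : qInt q 0 = 0 := by simp [qInt]

lemma qInt_pos {q : ℝ} (hq0 : 0 < q) (k : ℕ) : 0 < qInt q (k + 1) :=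
  Finset.sum_pos (fun i _ => pow_pos hq0 i) ⟨0, by simp⟩

lemma qInt_ne_zero {q : ℝ} (hq0 : 0 < q) (k : ℕ) : qInt q (k + 1) ≠ 0 :=
  (qInt_pos hq0 k).ne'

lemma qFact_ne_zero {q : ℝ} (hq0 : 0 < q) : ∀ k, qFact q k ≠ 0
  | 0 => one_ne_zero
  | (k+1) => mul_ne_zero (qFact_ne_zero hq0 k) (qInt_ne_zero hq0 k)

lemma qEvenDFact_ne_zero {q : ℝ} (hq0 : 0 < q) : ∀ k, qEvenDFact q k ≠ 0
  | 0 => one_ne_zero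
  | (k+1) => mul_ne_zero
      (by rw [show 2*(k+1) = 2*k+1+1 from by ring]; exact qInt_ne_zero hq0 _)
      (qEvenDFact_ne_zero hq0 k)

lemma qInt_add (q : ℝ) (a b : ℕ) : qInt q (a + b) = qInt q a + q ^ a * qInt q b := by
  simp [qInt, Finset.sum_range_add, pow_add, Finset.mul_sum]

lemma qDeriv_C_mul_X_pow (q a : ℝ) (k : ℕ) :
    qDeriv q (C a * X ^ k) = C (a * qInt q k) * X ^ (k - 1) := by
  rw [C_mul_X_pow_eq_monomial, qDeriv, Polynomial.sum_monomial_index]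
  simp

lemma qDeriv_add (q : ℝ) (p r : Polynomial ℝ) :
    qDeriv q (p + r) = qDeriv q p + qDeriv q r :=
  Polynomial.sum_add_index p r _ (fun i => by simp)
    (fun a b₁ b₂ => by rw [add_mul, C_add, add_mul])

lemma qDeriv_sum (q : ℝ) (s : Finset ℕ) (f : ℕ → Polynomial ℝ) :
    qDeriv q (∑ i ∈ s, f i) = ∑ i ∈ s, qDeriv q (f i) := by
  classical
  induction s using Finset.induction_on with
  | empty => simp [qDeriv]
  | insert _ _ h ih => rw [Finset.sum_insert h, Finset.sum_insert h, qDeriv_add, ih]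

lemma qHermiteCoeff_even (q : ℝ) (k : ℕ) :
    qHermiteCoeff q (2 * k) =
      (-1) ^ k * q ^ (k * (k - 1)) * qFact q (2 * k) / qEvenDFact q k := by
  simp [qHermiteCoeff, Nat.mul_mod_right, Nat.mul_div_cancel_left]

lemma qHermiteCoeff_odd (q : ℝ) (k : ℕ) : qHermiteCoeff q (2 * k + 1) = 0 := by
  simp only [qHermiteCoeff]
  rw [if_neg (by omega)]

lemma keyEven (q : ℝ) (hq0 : 0 < q) (i D : ℕ) :
    q ^ (2*i + D) * Bc q (2*i + D + 2) (2*i) *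
      (qInt q (D + 2) * qInt q (D + 1))
    + q ^ D * qInt q (2*i + 2) * Bc q (2*i + D + 2) (2*i + 2) = 0 := by
  have h2 : qHermiteCoeff q (2*i+2)
      = (-1)^(i+1) * q^((i+1)*i) * qFact q (2*i+2) / qEvenDFact q (i+1) := by
    rw [show 2*i+2 = 2*(i+1) from by ring, qHermiteCoeff_even]
    simp
  have fD2 : qFact q (D+2) = qFact q D * qInt q (D+1) * qInt q (D+2) := rfl
  have f2i2 : qFact q (2*i+2) = qFact q (2*i) * qInt q (2*i+1) * qInt q (2*i+2) := rfl
  have hE : qEvenDFact q (i+1) = qInt q (2*i+2) * qEvenDFact q i := by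
    rw [show qEvenDFact q (i+1) = qInt q (2*(i+1)) * qEvenDFact q i from rfl,
        show 2*(i+1) = 2*i+2 from by ring]
  simp only [Bc, qBinom, qHermiteCoeff_even, h2,
      show 2*i + D + 2 - 2*i = D + 2 from by omega,
      show 2*i + D + 2 - (2*i + 2) = D from by omega, fD2, f2i2, hE]
  have hFD := qFact_ne_zero hq0 D
  have hF2i := qFact_ne_zero hq0 (2*i)
  have hFn := qFact_ne_zero hq0 (2*i+D+2)
  have hEi := qEvenDFact_ne_zero hq0 i
  have hqD1 := qInt_ne_zero hq0 D
  have hqD2 := qInt_ne_zero hq0 (D+1)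
  have hq2i1 := qInt_ne_zero hq0 (2*i)
  have hq2i2 := qInt_ne_zero hq0 (2*i+1)
  rcases i with _ | k
  · norm_num
    field_simp
    ring
  · simp only [Nat.succ_sub_one]
    field_simp
    ring

lemma key (q : ℝ) (hq0 : 0 < q) (N j : ℕ) (hj : j ≤ N) :
    q ^ N * Bc q (N+2) j * (qInt q (N+2-j) * qInt q (N+1-j))
    + q ^ (N-j) * qInt q (j+2) * Bc q (N+2) (j+2) = 0 := by
  rcases Nat.even_or_odd j with ⟨i, hi⟩ | ⟨i, hi⟩
  · obtain ⟨D, hD⟩ : ∃ D, N = 2*i + D := ⟨N - 2*i, by omega⟩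
    subst hD
    rw [show j = 2*i from by omega] at *
    rw [show 2*i + D + 2 - 2*i = D + 2 from by omega,
        show 2*i + D + 1 - 2*i = D + 1 from by omega,
        show 2*i + D - 2*i = D from by omega]
    exact keyEven q hq0 i D
  · subst hi
    simp only [Bc, show 2*i+1+2 = 2*(i+1)+1 from by ring, qHermiteCoeff_odd]
    ring

/-- The second-order q-difference equation for the q-Hermite polynomials:
`q^(n-2) D_q² H_{n,q}(x) − x q^n D_q H_{n,q}(x) + [n]_q H_{n,q}(qx) = 0` for n ≥ 2. -/
theorem qHermite_qDifference_equation (q : ℝ) (hq0 : 0 < q) (hq1 : q < 1)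
    (n : ℕ) (hn : 2 ≤ n) :
    Polynomial.C (q ^ (n - 2)) * (qDeriv q)^[2] (qHermite q n)
      - Polynomial.C (q ^ n) * Polynomial.X * qDeriv q (qHermite q n)
      + Polynomial.C (qInt q n)
          * (qHermite q n).comp (Polynomial.C q * Polynomial.X) = 0 := by
  obtain ⟨N, rfl⟩ : ∃ N, n = N + 2 := ⟨n - 2, by omega⟩
  have hH : qHermite q (N + 2) = ∑ m ∈ range (N + 3), C (Bc q (N+2) m) * X ^ (N + 2 - m) := rfl
  have hD1 : qDeriv q (qHermite q (N + 2)) =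
      ∑ m ∈ range (N + 3), C (Bc q (N+2) m * qInt q (N + 2 - m)) * X ^ (N + 1 - m) := by
    rw [hH, qDeriv_sum]
    exact sum_congr rfl fun m _ => by
      rw [qDeriv_C_mul_X_pow, show N + 2 - m - 1 = N + 1 - m from by omega]
  have hT1 : C (q ^ N) * qDeriv q (qDeriv q (qHermite q (N + 2))) =
      ∑ m ∈ range (N + 3),
        C (q ^ N * (Bc q (N+2) m * qInt q (N + 2 - m) * qInt q (N + 1 - m))) * X ^ (N - m) := by
    rw [hD1, qDeriv_sum]
    rw [Finset.mul_sum]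
    refine sum_congr rfl fun m _ => ?_
    rw [qDeriv_C_mul_X_pow, show N + 1 - m - 1 = N - m from by omega, ← mul_assoc, ← C_mul]
  have hT2 : C (q ^ (N + 2)) * X * qDeriv q (qHermite q (N + 2)) =
      ∑ m ∈ range (N + 3),
        C (q ^ (N + 2) * (Bc q (N+2) m * qInt q (N + 2 - m))) * X ^ (N + 1 - m + 1) := by
    rw [hD1, Finset.mul_sum]
    refine sum_congr rfl fun m _ => ?_
    simp only [C_mul]
    ring
  have hT3 : C (qInt q (N + 2)) * (qHermite q (N + 2)).comp (C q * X) =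
      ∑ m ∈ range (N + 3),
        C (qInt q (N + 2) * (Bc q (N+2) m * q ^ (N + 2 - m))) * X ^ (N + 2 - m) := by
    rw [hH, Polynomial.sum_comp, Finset.mul_sum]
    refine sum_congr rfl fun m _ => ?_
    rw [mul_comp, C_comp, pow_comp, X_comp, mul_pow, ← C_pow]
    simp only [C_mul]
    ring
  rw [show (qDeriv q)^[2] (qHermite q (N+2)) = qDeriv q (qDeriv q (qHermite q (N+2))) from rfl,
      show N + 2 - 2 = N from by omega, hT1, hT2, hT3, sub_add_eq_add_sub, add_sub_assoc,
      ← Finset.sum_sub_distrib]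
  have hU : ∑ m ∈ range (N + 3),
        (C (qInt q (N + 2) * (Bc q (N+2) m * q ^ (N + 2 - m))) * X ^ (N + 2 - m)
          - C (q ^ (N + 2) * (Bc q (N+2) m * qInt q (N + 2 - m))) * X ^ (N + 1 - m + 1)) =
      ∑ m ∈ range (N + 3), C (Bc q (N+2) m * q ^ (N + 2 - m) * qInt q m) * X ^ (N + 2 - m) := by
    refine sum_congr rfl fun m hm => ?_
    rcases Nat.lt_or_ge m (N + 2) with h | h
    · rw [show N + 1 - m + 1 = N + 2 - m from by omega, ← sub_mul, ← C_sub]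
      congr 1
      have h1 : qInt q (N + 2) = qInt q m + q ^ m * qInt q (N + 2 - m) := by
        rw [← qInt_add]; congr 1; omega
      have h2 : q ^ (N + 2) = q ^ m * q ^ (N + 2 - m) := by
        rw [← pow_add]; congr 1; omega
      rw [h1, h2]; ring
    · have hm2 : m = N + 2 := by simp at hm; omega
      subst hm2
      simp [Nat.sub_self, qInt_zero, mul_comm]
  rw [hU]
  have hS1 : ∑ m ∈ range (N + 3),
        C (q ^ N * (Bc q (N+2) m * qInt q (N + 2 - m) * qInt q (N + 1 - m))) * X ^ (N - m) =
      ∑ m ∈ range (N + 1),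
        C (q ^ N * (Bc q (N+2) m * qInt q (N + 2 - m) * qInt q (N + 1 - m))) * X ^ (N - m) := by
    rw [Finset.sum_range_succ, Finset.sum_range_succ]
    rw [show N + 1 - (N + 1) = 0 from by omega, show N + 2 - (N + 2) = 0 from by omega,
        qInt_zero]
    simp
  have hSU : ∑ m ∈ range (N + 3), C (Bc q (N+2) m * q ^ (N + 2 - m) * qInt q m) * X ^ (N + 2 - m) =
      ∑ j ∈ range (N + 1),
        C (Bc q (N+2) (j+2) * q ^ (N - j) * qInt q (j+2)) * X ^ (N - j) := by
    rw [Finset.sum_range_succ', Finset.sum_range_succ']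
    have z0 : C (Bc q (N+2) 0 * q ^ (N + 2 - 0) * qInt q 0) * X ^ (N + 2 - 0) = 0 := by
      simp [qInt_zero]
    have z1 : C (Bc q (N+2) (0+1) * q ^ (N + 2 - (0+1)) * qInt q (0+1)) * X ^ (N + 2 - (0+1)) = 0 := by
      have : qHermiteCoeff q 1 = 0 := by simpa using qHermiteCoeff_odd q 0
      simp [Bc, this]
    rw [z0, z1, add_zero, add_zero]
    refine sum_congr rfl fun j _ => ?_
    rw [show j + 1 + 1 = j + 2 from by omega, show N + 2 - (j + 2) = N - j from by omega]
  rw [hS1, hSU, ← Finset.sum_add_distrib]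
  refine Finset.sum_eq_zero fun j hj => ?_
  have hjN : j ≤ N := by simp at hj; omega
  rw [← add_mul, ← C_add]
  have hc : q ^ N * (Bc q (N+2) j * qInt q (N + 2 - j) * qInt q (N + 1 - j))
      + Bc q (N+2) (j+2) * q ^ (N - j) * qInt q (j+2) = 0 := by
    have h := key q hq0 N j hjN
    linear_combination h
  rw [hc, map_zero, zero_mul]
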